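/- Fix μ_1, μ_2 ∈ {(1+i)/2, (1−i)/2, (−1+i)/2, (−1−i)/2} and β_1, β_2 ∈ (1+i)ℤ[i], set g_j(z) = μ_j·z + β_j on ℂ, and let K be the unique nonempty compact subset of ℂ with K = g_1(K) ∪ g_2(K). If K has positive two-dimensional Lebesgue measure, then there exists a set T of affine maps of ℂ, each of the form t(z) = αz + 2β with α ∈ {1, i, −1, −i} and β ∈ ℤ[i], such that ℂ = ⋃_{t ∈ T} t(K) and the Lebesgue measure of t(K) ∩ t'(K) is zero for all distinct t, t' ∈ T. (Instance, for the Lattès map, of the Tiling Theorem: K tiles φ^{-1}(J) = ℂ under deck transformations.) -/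

import Mathlib

open MeasureTheory Metric Set Complex
open scoped ENNReal NNReal

namespace LT

noncomputable section

/-- affine map `z ↦ a z + b` encoded by the pair `(a, b)`. -/
def ap (p : ℂ × ℂ) : ℂ → ℂ := fun z => p.1 * z + p.2

/-- composition of affine pairs -/
def pmul (p q : ℂ × ℂ) : ℂ × ℂ := (p.1 * q.1, p.1 * q.2 + p.2)

/-- inverse of an affine pair -/
def pinv (p : ℂ × ℂ) : ℂ × ℂ := (p.1⁻¹, -(p.2 / p.1))

lemma ap_pmul (p q : ℂ × ℂ) : ap (pmul p q) = ap p ∘ ap q := by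
  funext z; simp only [ap, pmul, Function.comp]; ring

lemma pmul_assoc (p q r : ℂ × ℂ) : pmul (pmul p q) r = pmul p (pmul q r) := by
  simp only [pmul, Prod.mk.injEq]; constructor <;> ring

lemma pmul_one_left (p : ℂ × ℂ) : pmul (1, 0) p = p := by
  simp [pmul]

lemma pmul_one_right (p : ℂ × ℂ) : pmul p (1, 0) = p := by
  simp [pmul]

lemma ap_pinv_ap (p : ℂ × ℂ) (hp : p.1 ≠ 0) (z : ℂ) : ap (pinv p) (ap p z) = z := by
  show p.1⁻¹ * (p.1 * z + p.2) + -(p.2 / p.1) = z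
  rw [mul_add, ← mul_assoc, inv_mul_cancel₀ hp, one_mul, div_eq_inv_mul]; ring

lemma ap_ap_pinv (p : ℂ × ℂ) (hp : p.1 ≠ 0) (z : ℂ) : ap p (ap (pinv p) z) = z := by
  show p.1 * (p.1⁻¹ * z + -(p.2 / p.1)) + p.2 = z
  rw [mul_add, ← mul_assoc, mul_inv_cancel₀ hp, one_mul, div_eq_inv_mul, mul_neg, ← mul_assoc,
    mul_inv_cancel₀ hp]; ring

lemma pinv_ne_zero (p : ℂ × ℂ) (hp : p.1 ≠ 0) : (pinv p).1 ≠ 0 := by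
  simp [pinv, hp]

lemma ap_injective (p : ℂ × ℂ) (hp : p.1 ≠ 0) : Function.Injective (ap p) := by
  intro x y hxy
  have := congrArg (ap (pinv p)) hxy
  rwa [ap_pinv_ap p hp, ap_pinv_ap p hp] at this

lemma ap_image_ap_pinv_image (p : ℂ × ℂ) (hp : p.1 ≠ 0) (s : Set ℂ) :
    ap (pinv p) '' (ap p '' s) = s := by
  rw [← Set.image_comp]
  have : ap (pinv p) ∘ ap p = id := by funext z; exact ap_pinv_ap p hp z
  rw [this, Set.image_id]

lemma ap_pinv_image_ap_image (p : ℂ × ℂ) (hp : p.1 ≠ 0) (s : Set ℂ) :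
    ap p '' (ap (pinv p) '' s) = s := by
  rw [← Set.image_comp]
  have : ap p ∘ ap (pinv p) = id := by funext z; exact ap_ap_pinv p hp z
  rw [this, Set.image_id]

lemma pinv_pmul (p q : ℂ × ℂ) (hp : p.1 ≠ 0) (hq : q.1 ≠ 0) :
    pinv (pmul p q) = pmul (pinv q) (pinv p) := by
  simp only [pinv, pmul, Prod.mk.injEq]
  constructor <;> field_simp <;> ring

lemma pmul_pinv_self (p : ℂ × ℂ) (hp : p.1 ≠ 0) : pmul (pinv p) p = (1, 0) := by
  simp only [pinv, pmul, Prod.mk.injEq]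
  constructor <;> field_simp <;> ring

lemma det_mulLeft (a : ℂ) : LinearMap.det (LinearMap.mulLeft ℝ a) = Complex.normSq a := by
  rw [← LinearMap.det_toMatrix Complex.basisOneI, Matrix.det_fin_two]
  simp [LinearMap.toMatrix_apply, Complex.normSq_apply]

lemma vol_ap_image (p : ℂ × ℂ) (s : Set ℂ) :
    volume (ap p '' s) = ENNReal.ofReal (Complex.normSq p.1) * volume s := by
  have h1 : ap p '' s = (fun z => z + p.2) '' ((LinearMap.mulLeft ℝ p.1) '' s) := by
    rw [← Set.image_comp]; rfl
  rw [h1]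
  have h2 : volume ((fun z => z + p.2) '' ((LinearMap.mulLeft ℝ p.1) '' s))
      = volume ((LinearMap.mulLeft ℝ p.1) '' s) := by
    rw [Set.image_add_right]
    exact measure_preimage_add_right volume _ _
  rw [h2, Measure.addHaar_image_linearMap, det_mulLeft, _root_.abs_of_nonneg (Complex.normSq_nonneg _)]

lemma dist_ap (p : ℂ × ℂ) (x y : ℂ) :
    dist (ap p x) (ap p y) = ‖p.1‖ * dist x y := by
  simp only [ap, Complex.dist_eq]
  rw [show p.1 * x + p.2 - (p.1 * y + p.2) = p.1 * (x - y) by ring, norm_mul]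

lemma ap_image_closedBall (p : ℂ × ℂ) (hp : p.1 ≠ 0) (x : ℂ) (r : ℝ) :
    ap p '' closedBall x r = closedBall (ap p x) (‖p.1‖ * r) := by
  ext z
  constructor
  · rintro ⟨w, hw, rfl⟩
    rw [mem_closedBall] at *
    rw [dist_ap]
    exact mul_le_mul_of_nonneg_left hw (norm_nonneg _)
  · intro hz
    refine ⟨ap (pinv p) z, ?_, ap_ap_pinv p hp z⟩
    rw [mem_closedBall] at *
    have : dist (ap (pinv p) z) x = ‖p.1⁻¹‖ * dist z (ap p x) := by
      have := dist_ap (pinv p) z (ap p x)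
      rwa [show ap (pinv p) (ap p x) = x from ap_pinv_ap p hp x] at this
    rw [this, norm_inv]
    rw [inv_mul_le_iff₀ (norm_pos_iff.2 hp)]
    exact hz

/-! ### fourth roots of unity and Gaussian integers -/

def U4 : Set ℂ := {1, Complex.I, -1, -Complex.I}

def GInt (z : ℂ) : Prop := ∃ a b : ℤ, z = (a : ℂ) + (b : ℂ) * Complex.I

lemma U4_ne_zero {a : ℂ} (ha : a ∈ U4) : a ≠ 0 := by
  rcases ha with rfl | rfl | rfl | rfl <;> simp [Complex.I_ne_zero]

lemma U4_mul {a b : ℂ} (ha : a ∈ U4) (hb : b ∈ U4) : a * b ∈ U4 := by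
  simp only [U4, mem_insert_iff, mem_singleton_iff] at *
  rcases ha with rfl | rfl | rfl | rfl <;> rcases hb with rfl | rfl | rfl | rfl <;>
    simp [Complex.I_mul_I] <;> ring_nf <;> simp [Complex.I_sq]

lemma U4_inv {a : ℂ} (ha : a ∈ U4) : a⁻¹ ∈ U4 := by
  rcases ha with rfl | rfl | rfl | rfl <;>
    simp [U4, Complex.inv_I, inv_neg]

lemma U4_normSq {a : ℂ} (ha : a ∈ U4) : Complex.normSq a = 1 := by
  rcases ha with rfl | rfl | rfl | rfl <;> simp

lemma U4_abs {a : ℂ} (ha : a ∈ U4) : ‖a‖ = 1 := by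
  rcases ha with rfl | rfl | rfl | rfl <;> simp

lemma GInt_add {z w : ℂ} (hz : GInt z) (hw : GInt w) : GInt (z + w) := by
  obtain ⟨a, b, rfl⟩ := hz; obtain ⟨c, d, rfl⟩ := hw
  exact ⟨a + c, b + d, by push_cast; ring⟩

lemma GInt_mul {z w : ℂ} (hz : GInt z) (hw : GInt w) : GInt (z * w) := by
  obtain ⟨a, b, rfl⟩ := hz; obtain ⟨c, d, rfl⟩ := hw
  refine ⟨a * c - b * d, a * d + b * c, ?_⟩
  push_cast
  have : Complex.I * Complex.I = -1 := Complex.I_mul_I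
  ring_nf
  rw [Complex.I_sq]
  ring

lemma GInt_sub {z w : ℂ} (hz : GInt z) (hw : GInt w) : GInt (z - w) := by
  obtain ⟨a, b, rfl⟩ := hz; obtain ⟨c, d, rfl⟩ := hw
  exact ⟨a - c, b - d, by push_cast; ring⟩

lemma GInt_U4 {a : ℂ} (ha : a ∈ U4) : GInt a := by
  rcases ha with rfl | rfl | rfl | rfl
  · exact ⟨1, 0, by push_cast; ring⟩
  · exact ⟨0, 1, by push_cast; ring⟩
  · exact ⟨-1, 0, by push_cast; ring⟩
  · exact ⟨0, -1, by push_cast; ring⟩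

lemma GInt_two_pow (n : ℕ) : GInt ((2 : ℂ) ^ n) :=
  ⟨2 ^ n, 0, by push_cast; ring⟩

/-- the shape of an `n`-fold composition of the basic contractions: the linear
coefficient is a fourth root of unity divided by `2^n`, and the translation part
is in `2^(1-n) ℤ[i]`. -/
def Qp (n : ℕ) (p : ℂ × ℂ) : Prop :=
  ((2 : ℂ) ^ n * p.1 ∈ U4) ∧ ∃ c : ℂ, GInt c ∧ (2 : ℂ) ^ n * p.2 = 2 * c

lemma Qp_one_unit : Qp 0 ((1 : ℂ), (0 : ℂ)) := by
  constructor
  · simp [U4]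
  · exact ⟨0, ⟨0, 0, by push_cast; ring⟩, by push_cast; ring⟩

lemma Qp_pmul {p q : ℂ × ℂ} {n : ℕ} (hp : Qp 1 p) (hq : Qp n q) :
    Qp (n + 1) (pmul p q) := by
  obtain ⟨hp1, cp, hcp, hp2⟩ := hp
  obtain ⟨hq1, cq, hcq, hq2⟩ := hq
  constructor
  · have : (2 : ℂ) ^ (n + 1) * (pmul p q).1 = ((2 : ℂ) ^ 1 * p.1) * ((2 : ℂ) ^ n * q.1) := by
      simp only [pmul]; ring
    rw [this]
    exact U4_mul hp1 hq1
  · refine ⟨((2 : ℂ) ^ 1 * p.1) * cq + (2 : ℂ) ^ n * cp, ?_, ?_⟩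
    · exact GInt_add (GInt_mul (GInt_U4 hp1) hcq) (GInt_mul (GInt_two_pow n) hcp)
    · have : (2 : ℂ) ^ (n + 1) * (pmul p q).2
          = ((2 : ℂ) ^ 1 * p.1) * ((2 : ℂ) ^ n * q.2) + (2 : ℂ) ^ n * ((2 : ℂ) ^ 1 * p.2) := by
        simp only [pmul]; ring
      rw [this, hq2, hp2]
      ring

lemma Qp_fst_ne_zero {n : ℕ} {p : ℂ × ℂ} (hp : Qp n p) : p.1 ≠ 0 := by
  intro h
  have := U4_ne_zero hp.1
  rw [h, mul_zero] at this
  exact this rfl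

lemma Qp_normSq {n : ℕ} {p : ℂ × ℂ} (hp : Qp n p) :
    Complex.normSq p.1 = ((4 : ℝ) ^ n)⁻¹ := by
  have h1 : Complex.normSq ((2 : ℂ) ^ n * p.1) = 1 := U4_normSq hp.1
  rw [map_mul, map_pow] at h1
  have h2 : Complex.normSq 2 = 4 := by
    simp [Complex.normSq_apply]; norm_num
  rw [h2] at h1
  have h4 : (0 : ℝ) < 4 ^ n := by positivity
  field_simp at h1 ⊢
  linarith

lemma Qp_abs {n : ℕ} {p : ℂ × ℂ} (hp : Qp n p) :
    ‖p.1‖ = ((2 : ℝ) ^ n)⁻¹ := by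
  have h := Qp_normSq hp
  have e1 : ((4 : ℝ) ^ n) = ((2 : ℝ) ^ n) ^ 2 := by
    rw [← pow_mul, mul_comm, pow_mul]; norm_num
  have h1 : ‖p.1‖ ^ 2 = (((2 : ℝ) ^ n)⁻¹) ^ 2 := by
    rw [Complex.sq_norm, h, e1, inv_pow]
  have h2 : (0 : ℝ) ≤ ‖p.1‖ := norm_nonneg _
  have h3 : (0 : ℝ) ≤ ((2 : ℝ) ^ n)⁻¹ := by positivity
  nlinarith [sq_nonneg (‖p.1‖ - ((2 : ℝ) ^ n)⁻¹), sq_nonneg (‖p.1‖ + ((2 : ℝ) ^ n)⁻¹)]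

/-- the composition `p⁻¹ ∘ q` of two maps with `Qp n` is a deck transformation. -/
lemma deck_of_Qp {n : ℕ} {p q : ℂ × ℂ} (hp : Qp n p) (hq : Qp n q) :
    ∃ α β : ℂ, α ∈ U4 ∧ GInt β ∧ pmul (pinv p) q = (α, 2 * β) := by
  obtain ⟨hp1, cp, hcp, hp2⟩ := hp
  obtain ⟨hq1, cq, hcq, hq2⟩ := hq
  have hpne : p.1 ≠ 0 := Qp_fst_ne_zero ⟨hp1, cp, hcp, hp2⟩
  have h2n : (2 : ℂ) ^ n ≠ 0 := pow_ne_zero _ two_ne_zero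
  have hu : ((2 : ℂ) ^ n * p.1)⁻¹ ∈ U4 := U4_inv hp1
  refine ⟨((2 : ℂ) ^ n * q.1) * ((2 : ℂ) ^ n * p.1)⁻¹,
          (cq - cp) * ((2 : ℂ) ^ n * p.1)⁻¹, U4_mul hq1 hu,
          GInt_mul (GInt_sub hcq hcp) (GInt_U4 hu), ?_⟩
  have hppos : (2 : ℂ) ^ n * p.1 ≠ 0 := U4_ne_zero hp1
  simp only [pmul, pinv, Prod.mk.injEq]
  constructor
  · field_simp
  · have : p.1⁻¹ * q.2 + -(p.2 / p.1) = (((2:ℂ)^n * q.2) - ((2:ℂ)^n * p.2)) / ((2:ℂ)^n * p.1) := by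
      field_simp
      ring
    rw [this, hq2, hp2]
    field_simp

/-! ### the finite-additivity forcing lemma -/

lemma null_of_sum_eq {α : Type*} [DecidableEq α] (s : Finset α) (f : α → Set ℂ)
    (hm : ∀ i ∈ s, MeasurableSet (f i))
    (hfin : (∑ i ∈ s, volume (f i)) ≠ ⊤)
    (heq : volume (⋃ i ∈ s, f i) = ∑ i ∈ s, volume (f i))
    {i j : α} (hi : i ∈ s) (hj : j ∈ s) (hij : i ≠ j) :
    volume (f i ∩ f j) = 0 := by
  classical
  set rest := ∑ k ∈ (s.erase i).erase j, volume (f k) with hrest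
  have hji : j ∈ s.erase i := Finset.mem_erase.2 ⟨hij.symm, hj⟩
  have hsub : (⋃ k ∈ s, f k) ⊆ (f i ∪ f j) ∪ ⋃ k ∈ (s.erase i).erase j, f k := by
    intro x hx
    rw [Set.mem_iUnion₂] at hx
    obtain ⟨k, hk, hxk⟩ := hx
    by_cases hki : k = i
    · exact Or.inl (Or.inl (hki ▸ hxk))
    by_cases hkj : k = j
    · exact Or.inl (Or.inr (hkj ▸ hxk))
    · exact Or.inr (Set.mem_iUnion₂.2 ⟨k, Finset.mem_erase.2 ⟨hkj, Finset.mem_erase.2 ⟨hki, hk⟩⟩, hxk⟩)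
  have h1 : volume (⋃ k ∈ s, f k) ≤ volume (f i ∪ f j) + rest := by
    refine le_trans (measure_mono hsub) (le_trans (measure_union_le _ _) ?_)
    exact add_le_add_right (measure_biUnion_finset_le _ _) _
  have h2 : volume (f i ∪ f j) + volume (f i ∩ f j) = volume (f i) + volume (f j) :=
    measure_union_add_inter (f i) (hm j hj)
  have hsum : ∑ k ∈ s, volume (f k) = volume (f i) + (volume (f j) + rest) := by
    rw [← Finset.add_sum_erase _ _ hi, ← Finset.add_sum_erase _ _ hji]
  have key : (∑ k ∈ s, volume (f k)) + volume (f i ∩ f j)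
      ≤ (∑ k ∈ s, volume (f k)) + 0 := by
    rw [add_zero]
    calc (∑ k ∈ s, volume (f k)) + volume (f i ∩ f j)
        ≤ (volume (f i ∪ f j) + rest) + volume (f i ∩ f j) := by
          rw [← heq]; exact add_le_add_left h1 _
      _ = (volume (f i ∪ f j) + volume (f i ∩ f j)) + rest := by ring
      _ = volume (f i) + volume (f j) + rest := by rw [h2]
      _ = ∑ k ∈ s, volume (f k) := by rw [hsum]; ring
  have := (ENNReal.add_le_add_iff_left hfin).1 key
  exact le_antisymm this zero_le

/-! ### words over the alphabet of the four level-two contractions -/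

abbrev I4 := Fin 2 × Fin 2

variable (h : I4 → ℂ × ℂ)

/-- the affine pair of the composition `h w₁ ∘ h w₂ ∘ ⋯` -/
def HP : List I4 → ℂ × ℂ := fun l => l.foldr (fun s q => pmul (h s) q) (1, 0)

@[simp] lemma HP_nil : HP h [] = (1, 0) := rfl

@[simp] lemma HP_cons (s : I4) (w : List I4) : HP h (s :: w) = pmul (h s) (HP h w) := rfl

lemma HP_append (w₁ w₂ : List I4) : HP h (w₁ ++ w₂) = pmul (HP h w₁) (HP h w₂) := by
  induction w₁ with
  | nil => simp [pmul_one_left]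
  | cons s w ih => simp [ih, pmul_assoc]

lemma Qp_HP (hQ : ∀ s, Qp 1 (h s)) (w : List I4) : Qp w.length (HP h w) := by
  induction w with
  | nil => exact Qp_one_unit
  | cons s w ih => exact Qp_pmul (hQ s) ih

/-- all words of length `n` -/
def Ln : ℕ → Finset (List I4)
  | 0 => {[]}
  | n + 1 => ((Finset.univ : Finset I4) ×ˢ Ln n).image fun sw => sw.1 :: sw.2

lemma mem_Ln {n : ℕ} {w : List I4} : w ∈ Ln n ↔ w.length = n := by
  induction n generalizing w with
  | zero => simp [Ln, List.length_eq_zero_iff]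
  | succ n ih =>
    simp only [Ln, Finset.mem_image, Finset.mem_product, Finset.mem_univ, true_and]
    constructor
    · rintro ⟨⟨s, w'⟩, hw', rfl⟩
      simp [ih.1 hw']
    · intro hw
      cases w with
      | nil => simp at hw
      | cons s w' =>
        simp only [List.length_cons] at hw
        exact ⟨⟨s, w'⟩, ih.2 (Nat.succ_injective hw), rfl⟩

lemma card_Ln (n : ℕ) : (Ln n).card = 4 ^ n := by
  induction n with
  | zero => simp [Ln]
  | succ n ih =>
    rw [Ln, Finset.card_image_of_injective _ (fun a b hab => by
      simpa [Prod.ext_iff] using hab)]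
    rw [Finset.card_product, ih]
    have h4 : (Finset.univ : Finset I4).card = 4 := by decide
    rw [h4, pow_succ]
    ring

variable {K : Set ℂ}

lemma himg_subset (hcover : K = ⋃ s : I4, ap (h s) '' K) (s : I4) :
    ap (h s) '' K ⊆ K := by
  conv_rhs => rw [hcover]
  exact Set.subset_iUnion (fun s : I4 => ap (h s) '' K) s

lemma HP_image_subset (hcover : K = ⋃ s : I4, ap (h s) '' K) (w : List I4) :
    ap (HP h w) '' K ⊆ K := by
  induction w with
  | nil =>
    intro z hz
    obtain ⟨y, hy, rfl⟩ := hz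
    simpa [ap] using hy
  | cons s w ih =>
    rw [HP_cons, ap_pmul, Set.image_comp]
    exact le_trans (Set.image_mono ih) (himg_subset h hcover s)

lemma K_eq_level (hcover : K = ⋃ s : I4, ap (h s) '' K) (n : ℕ) :
    K = ⋃ w ∈ Ln n, ap (HP h w) '' K := by
  induction n with
  | zero =>
    have hid : ap (1, 0) = id := by funext z; simp [ap]
    simp [Ln, hid]
  | succ n ih =>
    have step : (⋃ w ∈ Ln (n + 1), ap (HP h w) '' K)
        = ⋃ s : I4, ⋃ w ∈ Ln n, ap (h s) '' (ap (HP h w) '' K) := by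
      ext z
      simp only [Set.mem_iUnion, Ln, Finset.mem_image, Finset.mem_product, Finset.mem_univ,
        true_and]
      constructor
      · rintro ⟨w, ⟨⟨s, w'⟩, hw', rfl⟩, hz⟩
        rw [HP_cons, ap_pmul, Set.image_comp] at hz
        exact ⟨s, w', hw', hz⟩
      · rintro ⟨s, w', hw', hz⟩
        refine ⟨s :: w', ⟨⟨s, w'⟩, hw', rfl⟩, ?_⟩
        rw [HP_cons, ap_pmul, Set.image_comp]
        exact hz
    rw [step]
    conv_lhs => rw [hcover]
    refine Set.iUnion_congr fun s => ?_
    rw [show (⋃ w ∈ Ln n, ap (h s) '' (ap (HP h w) '' K))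
        = ap (h s) '' (⋃ w ∈ Ln n, ap (HP h w) '' K) from (Set.image_iUnion₂ _ _).symm, ← ih]

lemma vol_HP_piece (hQ : ∀ s, Qp 1 (h s)) (w : List I4) :
    volume (ap (HP h w) '' K) = ENNReal.ofReal (((4 : ℝ) ^ w.length)⁻¹) * volume K := by
  rw [vol_ap_image, Qp_normSq (Qp_HP h hQ w)]

lemma sum_level (hQ : ∀ s, Qp 1 (h s)) (n : ℕ) :
    ∑ w ∈ Ln n, volume (ap (HP h w) '' K) = volume K := by
  have hv : ∀ w ∈ Ln n, volume (ap (HP h w) '' K)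
      = ENNReal.ofReal (((4 : ℝ) ^ n)⁻¹) * volume K := by
    intro w hw
    rw [vol_HP_piece h hQ, mem_Ln.1 hw]
  rw [Finset.sum_congr rfl hv, Finset.sum_const, card_Ln]
  have hkey : ((4 ^ n : ℕ) : ℝ≥0∞) * ENNReal.ofReal (((4 : ℝ) ^ n)⁻¹) = 1 := by
    have hcast : ((4 ^ n : ℕ) : ℝ≥0∞) = ENNReal.ofReal ((4 : ℝ) ^ n) := by
      rw [show ((4:ℝ)^n) = ((4^n : ℕ) : ℝ) by push_cast; ring, ENNReal.ofReal_natCast]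
    rw [hcast, ← ENNReal.ofReal_mul (by positivity)]
    rw [mul_inv_cancel₀ (by positivity : ((4 : ℝ) ^ n) ≠ 0)]
    simp
  rw [nsmul_eq_mul, ← mul_assoc, hkey, one_mul]

lemma level_null (hc : IsCompact K) (hQ : ∀ s, Qp 1 (h s))
    (hcover : K = ⋃ s : I4, ap (h s) '' K) {n : ℕ} {w w' : List I4}
    (hw : w ∈ Ln n) (hw' : w' ∈ Ln n) (hne : w ≠ w') :
    volume (ap (HP h w) '' K ∩ ap (HP h w') '' K) = 0 := by
  classical
  have hmeas : ∀ v ∈ Ln n, MeasurableSet (ap (HP h v) '' K) := by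
    intro v _
    have : Continuous (ap (HP h v)) :=
      ((continuous_const.mul continuous_id).add continuous_const :
        Continuous fun z : ℂ => (HP h v).1 * z + (HP h v).2)
    exact ((hc.image this).isClosed).measurableSet
  have hfin : (∑ v ∈ Ln n, volume (ap (HP h v) '' K)) ≠ ⊤ := by
    rw [sum_level h hQ]
    exact hc.measure_lt_top.ne
  have heq : volume (⋃ v ∈ Ln n, ap (HP h v) '' K) = ∑ v ∈ Ln n, volume (ap (HP h v) '' K) := by
    rw [← K_eq_level h hcover, sum_level h hQ]
  exact null_of_sum_eq (Ln n) _ hmeas hfin heq hw hw' hne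

/-! ### density points -/

lemma exists_density_point (hc : IsCompact K) (hpos : 0 < volume K) :
    ∃ z ∈ K, Filter.Tendsto
      (fun ρ => volume (K ∩ closedBall z ρ) / volume (closedBall z ρ)) (nhdsWithin 0 (Set.Ioi 0))
      (nhds 1) := by
  have hmeas : MeasurableSet K := hc.isClosed.measurableSet
  have hae := Besicovitch.ae_tendsto_measure_inter_div volume K
  have hmem : ∀ᵐ x ∂(volume.restrict K), x ∈ K := ae_restrict_mem hmeas
  have hne : volume.restrict K ≠ 0 := by
    intro h0
    have : volume K = 0 := by
      have := congrArg (fun m : Measure ℂ => m Set.univ) h0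
      simpa [Measure.restrict_apply_univ] using this
    exact absurd this hpos.ne'
  haveI : (ae (volume.restrict K)).NeBot := ae_neBot.2 hne
  obtain ⟨x, hx1, hx2⟩ := (hmem.and hae).exists
  exact ⟨x, hx1, hx2⟩

lemma density_small (hmeas : MeasurableSet K) {z : ℂ}
    (hd : Filter.Tendsto
      (fun ρ => volume (K ∩ closedBall z ρ) / volume (closedBall z ρ)) (nhdsWithin 0 (Set.Ioi 0))
      (nhds 1)) :
    ∀ δ : ℝ, 0 < δ → δ < 1 → ∃ ρ₀ > 0, ∀ ρ : ℝ, 0 < ρ → ρ ≤ ρ₀ →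
      volume (closedBall z ρ \ K) ≤ ENNReal.ofReal δ * ENNReal.ofReal (ρ ^ 2) := by
  intro δ hδ hδ1
  -- absorb the volume of the unit ball
  set cU := volume (ball (0 : ℂ) 1) with hcU
  have hcUfin : cU ≠ ⊤ := measure_ball_lt_top.ne
  set CU := cU.toReal + 1 with hCU
  have hCUpos : 0 < CU := by
    have : 0 ≤ cU.toReal := ENNReal.toReal_nonneg
    linarith
  have hcU_le : cU ≤ ENNReal.ofReal CU := by
    rw [hCU]
    calc cU = ENNReal.ofReal cU.toReal := (ENNReal.ofReal_toReal hcUfin).symm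
      _ ≤ ENNReal.ofReal (cU.toReal + 1) := ENNReal.ofReal_le_ofReal (by linarith)
  set δ' := δ / CU with hδ'
  have hδ'pos : 0 < δ' := div_pos hδ hCUpos
  have hδ'1 : δ' < 1 := by
    rw [hδ', div_lt_one hCUpos]
    have : 0 ≤ cU.toReal := ENNReal.toReal_nonneg
    linarith
  have hδ'CU : δ' * CU = δ := by
    rw [hδ', div_mul_cancel₀ _ hCUpos.ne']
  -- eventual lower bound on the density ratio
  have hlt : ENNReal.ofReal (1 - δ') < 1 := by
    rw [← ENNReal.ofReal_one]
    exact ENNReal.ofReal_lt_ofReal_iff_of_nonneg (by linarith) |>.2 (by linarith)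
  have hev : ∀ᶠ ρ in nhdsWithin 0 (Set.Ioi 0),
      ENNReal.ofReal (1 - δ') < volume (K ∩ closedBall z ρ) / volume (closedBall z ρ) :=
    hd.eventually (eventually_gt_nhds hlt)
  obtain ⟨ρ₁, hρ₁, hball⟩ := Metric.mem_nhdsWithin_iff.1 hev
  refine ⟨ρ₁ / 2, by linarith, fun ρ hρ hρle => ?_⟩
  have hρmem : ENNReal.ofReal (1 - δ') < volume (K ∩ closedBall z ρ) / volume (closedBall z ρ) := by
    refine hball ⟨?_, hρ⟩
    simp only [Metric.mem_ball, Real.dist_eq, sub_zero, abs_of_pos hρ]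
    linarith
  set B := closedBall z ρ with hB
  have hBpos : 0 < volume B := measure_closedBall_pos volume z hρ
  have hBfin : volume B ≠ ⊤ := measure_closedBall_lt_top.ne
  have hKB : ENNReal.ofReal (1 - δ') * volume B ≤ volume (K ∩ B) :=
    ENNReal.mul_le_of_le_div hρmem.le
  have hdiff : volume (B \ K) = volume B - volume (K ∩ B) := by
    have : B \ K = B \ (K ∩ B) := by
      ext x
      simp only [Set.mem_diff, Set.mem_inter_iff]
      tauto
    rw [this, measure_diff Set.inter_subset_right
      ((hmeas.inter measurableSet_closedBall).nullMeasurableSet)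
      (lt_of_le_of_lt (measure_mono Set.inter_subset_right) hBfin.lt_top).ne]
  have hstep : volume (B \ K) ≤ ENNReal.ofReal δ' * volume B := by
    rw [hdiff, tsub_le_iff_right]
    calc volume B = 1 * volume B := (one_mul _).symm
      _ = (ENNReal.ofReal δ' + ENNReal.ofReal (1 - δ')) * volume B := by
          rw [← ENNReal.ofReal_add (by linarith) (by linarith)]
          norm_num
      _ = ENNReal.ofReal δ' * volume B + ENNReal.ofReal (1 - δ') * volume B := by
          rw [add_mul]
      _ ≤ ENNReal.ofReal δ' * volume B + volume (K ∩ B) := add_le_add_right hKB _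
  -- volume of the ball
  have hvolB : volume B = ENNReal.ofReal (ρ ^ 2) * cU := by
    rw [hB, Measure.addHaar_closedBall volume z hρ.le, Complex.finrank_real_complex]
  calc volume (B \ K) ≤ ENNReal.ofReal δ' * (ENNReal.ofReal (ρ ^ 2) * cU) := by
        rw [← hvolB]; exact hstep
    _ ≤ ENNReal.ofReal δ' * (ENNReal.ofReal (ρ ^ 2) * ENNReal.ofReal CU) := by
        exact mul_le_mul_right (mul_le_mul_right hcU_le _) _
    _ = ENNReal.ofReal (δ' * CU) * ENNReal.ofReal (ρ ^ 2) := by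
        rw [← ENNReal.ofReal_mul (by positivity : (0:ℝ) ≤ ρ ^ 2),
          ← ENNReal.ofReal_mul hδ'pos.le,
          ← ENNReal.ofReal_mul (by positivity : (0:ℝ) ≤ δ' * CU)]
        congr 1
        ring
    _ = ENNReal.ofReal δ * ENNReal.ofReal (ρ ^ 2) := by rw [hδ'CU]

/-! ### the core blow-up estimate -/

lemma core_estimate (hQ : ∀ s, Qp 1 (h s)) (hcover : K = ⋃ s : I4, ap (h s) '' K)
    {z : ℂ} (hzK : z ∈ K) {C : ℝ} (hC : 0 ≤ C) (hCb : K ⊆ closedBall 0 C)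
    (hds : ∀ δ : ℝ, 0 < δ → δ < 1 → ∃ ρ₀ > 0, ∀ ρ : ℝ, 0 < ρ → ρ ≤ ρ₀ →
      volume (closedBall z ρ \ K) ≤ ENNReal.ofReal δ * ENNReal.ofReal (ρ ^ 2))
    (r : List I4) (R ε : ℝ) (hR : 0 < R) (hε : 0 < ε) :
    ∃ w₀ : List I4, volume (closedBall z R \ ap (pinv (HP h (w₀ ++ r))) '' K)
      ≤ ENNReal.ofReal ε := by
  classical
  set n := r.length with hn
  set D := 2 * C + R with hD
  have hDpos : 0 < D := by rw [hD]; linarith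
  -- choose δ
  set δ := min (ε / ((4 : ℝ) ^ n * D ^ 2 + 1)) (1 / 2) with hδdef
  have hδpos : 0 < δ := by
    apply lt_min
    · apply div_pos hε
      positivity
    · norm_num
  have hδ1 : δ < 1 := lt_of_le_of_lt (min_le_right _ _) (by norm_num)
  have hδbound : (4 : ℝ) ^ n * D ^ 2 * δ ≤ ε := by
    have h1 : δ ≤ ε / ((4 : ℝ) ^ n * D ^ 2 + 1) := min_le_left _ _
    have h2 : (0 : ℝ) < (4 : ℝ) ^ n * D ^ 2 + 1 := by positivity
    have h3 : (4 : ℝ) ^ n * D ^ 2 * δ ≤ (4 : ℝ) ^ n * D ^ 2 * (ε / ((4 : ℝ) ^ n * D ^ 2 + 1)) := by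
      apply mul_le_mul_of_nonneg_left h1
      positivity
    refine le_trans h3 ?_
    have heq : (4:ℝ)^n * D^2 * (ε / ((4:ℝ)^n*D^2+1)) = ε * (((4:ℝ)^n*D^2) / ((4:ℝ)^n*D^2+1)) := by
      ring
    rw [heq]
    have hle1 : ((4:ℝ)^n*D^2) / ((4:ℝ)^n*D^2+1) ≤ 1 := by
      rw [div_le_one h2]; linarith
    exact mul_le_of_le_one_right hε.le hle1
  obtain ⟨ρ₀, hρ₀, hρbound⟩ := hds δ hδpos hδ1
  -- choose m with 2⁻ᵐ D ≤ ρ₀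
  obtain ⟨m, hm⟩ : ∃ m : ℕ, ((2 : ℝ)⁻¹) ^ m * D ≤ ρ₀ := by
    obtain ⟨m, hm⟩ := exists_pow_lt_of_lt_one (div_pos hρ₀ hDpos) (by norm_num : (2:ℝ)⁻¹ < 1)
    exact ⟨m, by rw [← le_div_iff₀ hDpos]; exact hm.le⟩
  -- choose the word w₀ of length m whose cylinder contains z
  have hzlev := K_eq_level h hcover m
  have : z ∈ ⋃ w ∈ Ln m, ap (HP h w) '' K := by rw [← hzlev]; exact hzK
  rw [Set.mem_iUnion₂] at this
  obtain ⟨w₀, hw₀m, y₀, hy₀K, hy₀⟩ := this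
  refine ⟨w₀, ?_⟩
  set p := HP h (w₀ ++ r) with hp
  have hlen : (w₀ ++ r).length = m + n := by
    rw [List.length_append, mem_Ln.1 hw₀m]
  have hQp : Qp (m + n) p := by
    rw [hp, ← hlen]; exact Qp_HP h hQ _
  have hpne : p.1 ≠ 0 := Qp_fst_ne_zero hQp
  -- A: rewrite the difference as an image
  have hA : closedBall z R \ ap (pinv p) '' K
      = ap (pinv p) '' (ap p '' closedBall z R \ K) := by
    rw [Set.image_diff (ap_injective _ (pinv_ne_zero p hpne)),
      ap_image_ap_pinv_image p hpne]
  -- B: volume scaling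
  have hB : volume (closedBall z R \ ap (pinv p) '' K)
      = ENNReal.ofReal ((4 : ℝ) ^ (m + n)) * volume (ap p '' closedBall z R \ K) := by
    rw [hA, vol_ap_image]
    congr 2
    show Complex.normSq (p.1⁻¹) = _
    rw [map_inv₀, Qp_normSq hQp, inv_inv]
  -- C: the image ball
  have hC1 : ap p '' closedBall z R = closedBall (ap p z) (((2 : ℝ) ^ (m + n))⁻¹ * R) := by
    rw [ap_image_closedBall p hpne, Qp_abs hQp]
  -- D: the center is near z
  have hDc : dist (ap p z) z ≤ ((2 : ℝ) ^ m)⁻¹ * (2 * C) := by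
    have hsplit : ap p z = ap (HP h w₀) (ap (HP h r) z) := by
      rw [hp, HP_append, ap_pmul]; rfl
    have hyK : ap (HP h r) z ∈ K := HP_image_subset h hcover r ⟨z, hzK, rfl⟩
    have habs : ‖(HP h w₀).1‖ = ((2 : ℝ) ^ m)⁻¹ := by
      have := Qp_abs (Qp_HP h hQ w₀)
      rwa [mem_Ln.1 hw₀m] at this
    calc dist (ap p z) z = dist (ap (HP h w₀) (ap (HP h r) z)) (ap (HP h w₀) y₀) := by
          rw [← hsplit, hy₀]
      _ = ((2 : ℝ) ^ m)⁻¹ * dist (ap (HP h r) z) y₀ := by rw [dist_ap, habs]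
      _ ≤ ((2 : ℝ) ^ m)⁻¹ * (2 * C) := by
          apply mul_le_mul_of_nonneg_left _ (by positivity)
          have h1 : dist (ap (HP h r) z) 0 ≤ C := mem_closedBall.1 (hCb hyK)
          have h2 : dist y₀ 0 ≤ C := mem_closedBall.1 (hCb hy₀K)
          calc dist (ap (HP h r) z) y₀ ≤ dist (ap (HP h r) z) 0 + dist 0 y₀ := dist_triangle _ _ _
            _ ≤ C + C := add_le_add h1 (by rwa [dist_comm])
            _ = 2 * C := by ring
  -- E: inclusion into a small ball around z
  have hE : closedBall (ap p z) (((2 : ℝ) ^ (m + n))⁻¹ * R)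
      ⊆ closedBall z (((2 : ℝ) ^ m)⁻¹ * D) := by
    intro x hx
    rw [mem_closedBall] at *
    have hmn : ((2 : ℝ) ^ (m + n))⁻¹ ≤ ((2 : ℝ) ^ m)⁻¹ := by
      apply inv_anti₀ (by positivity)
      apply pow_le_pow_right₀ (by norm_num)
      omega
    calc dist x z ≤ dist x (ap p z) + dist (ap p z) z := dist_triangle _ _ _
      _ ≤ ((2 : ℝ) ^ (m + n))⁻¹ * R + ((2 : ℝ) ^ m)⁻¹ * (2 * C) := add_le_add hx hDc
      _ ≤ ((2 : ℝ) ^ m)⁻¹ * R + ((2 : ℝ) ^ m)⁻¹ * (2 * C) := by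
          apply add_le_add_left
          apply mul_le_mul_of_nonneg_right hmn hR.le
      _ = ((2 : ℝ) ^ m)⁻¹ * D := by rw [hD]; ring
  -- F: apply the density bound
  set ρ := ((2 : ℝ) ^ m)⁻¹ * D with hρdef
  have hρpos : 0 < ρ := by positivity
  have hρle : ρ ≤ ρ₀ := by
    rw [hρdef]
    calc ((2 : ℝ) ^ m)⁻¹ * D = ((2 : ℝ)⁻¹) ^ m * D := by rw [inv_pow]
      _ ≤ ρ₀ := hm
  have hF : volume (ap p '' closedBall z R \ K) ≤ ENNReal.ofReal δ * ENNReal.ofReal (ρ ^ 2) := by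
    refine le_trans (measure_mono ?_) (hρbound ρ hρpos hρle)
    rw [hC1]
    exact Set.diff_subset_diff_left hE
  -- G: conclude
  rw [hB]
  calc ENNReal.ofReal ((4 : ℝ) ^ (m + n)) * volume (ap p '' closedBall z R \ K)
      ≤ ENNReal.ofReal ((4 : ℝ) ^ (m + n)) * (ENNReal.ofReal δ * ENNReal.ofReal (ρ ^ 2)) :=
        mul_le_mul_right hF _
    _ = ENNReal.ofReal ((4 : ℝ) ^ (m + n) * (δ * ρ ^ 2)) := by
        rw [← ENNReal.ofReal_mul hδpos.le, ← ENNReal.ofReal_mul (by positivity)]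
    _ ≤ ENNReal.ofReal ε := by
        apply ENNReal.ofReal_le_ofReal
        have h2m4 : ((2:ℝ) ^ m) ^ 2 = (4:ℝ) ^ m := by
          rw [← pow_mul, mul_comm, pow_mul]; norm_num
        have hρsq : ρ ^ 2 = ((4 : ℝ) ^ m)⁻¹ * D ^ 2 := by
          rw [hρdef, mul_pow, inv_pow, h2m4]
        rw [hρsq]
        have h4mn : (4 : ℝ) ^ (m + n) = (4 : ℝ) ^ m * (4 : ℝ) ^ n := pow_add 4 m n
        calc (4 : ℝ) ^ (m + n) * (δ * (((4 : ℝ) ^ m)⁻¹ * D ^ 2))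
            = (4 : ℝ) ^ n * D ^ 2 * δ * ((4 : ℝ) ^ m * ((4 : ℝ) ^ m)⁻¹) := by
              rw [h4mn]; ring
          _ = (4 : ℝ) ^ n * D ^ 2 * δ := by
              rw [mul_inv_cancel₀ (by positivity : ((4:ℝ)^m) ≠ 0), mul_one]
          _ ≤ ε := hδbound

/-! ### patches -/

lemma HP_fst_ne_zero (hQ : ∀ s, Qp 1 (h s)) (w : List I4) : (HP h w).1 ≠ 0 :=
  Qp_fst_ne_zero (Qp_HP h hQ w)

lemma patch_extend (hQ : ∀ s, Qp 1 (h s)) (r w w₀ : List I4) :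
    pmul (pinv (HP h (w₀ ++ r))) (HP h (w₀ ++ w)) = pmul (pinv (HP h r)) (HP h w) := by
  rw [HP_append, HP_append,
    pinv_pmul _ _ (HP_fst_ne_zero h hQ w₀) (HP_fst_ne_zero h hQ r),
    pmul_assoc, ← pmul_assoc (pinv (HP h w₀)),
    pmul_pinv_self _ (HP_fst_ne_zero h hQ w₀), pmul_one_left]

lemma vol_image_inter {p : ℂ × ℂ} (hp : p.1 ≠ 0) {A B : Set ℂ}
    (h0 : volume (A ∩ B) = 0) : volume (ap p '' A ∩ ap p '' B) = 0 := by
  rw [← Set.image_inter (ap_injective p hp), vol_ap_image, h0, mul_zero]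

/-! ### closedness of deck unions -/

lemma closed_union_of_deck {K : Set ℂ} (hc : IsCompact K) {C : ℝ} (hC : 0 ≤ C)
    (hCb : K ⊆ closedBall 0 C) (T : Set (ℂ → ℂ))
    (hT : ∀ t ∈ T, ∃ α β : ℂ, α ∈ U4 ∧ GInt β ∧ t = ap (α, 2 * β)) :
    IsClosed (⋃ t ∈ T, t '' K) := by
  rw [Set.biUnion_eq_iUnion]
  apply LocallyFinite.isClosed_iUnion
  · intro x
    refine ⟨ball x 1, ball_mem_nhds x one_pos, ?_⟩
    set M := ‖x‖ + 1 + C with hM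
    have hMpos : 0 < M := by
      have := norm_nonneg x
      rw [hM]; linarith
    set N : ℤ := ⌈M⌉ with hN
    -- the finite set of candidate deck maps
    set S' : Set (ℂ → ℂ) := (fun q : ℂ × ℤ × ℤ =>
        ap (q.1, 2 * ((q.2.1 : ℂ) + (q.2.2 : ℂ) * Complex.I))) ''
        (U4 ×ˢ ((Set.Icc (-N) N) ×ˢ (Set.Icc (-N) N))) with hS'
    have hU4fin : U4.Finite := by
      refine Set.Finite.insert _ (Set.Finite.insert _ (Set.Finite.insert _ ?_))
      exact Set.finite_singleton _
    have hS'fin : S'.Finite :=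
      Set.Finite.image _ (hU4fin.prod ((Set.finite_Icc _ _).prod (Set.finite_Icc _ _)))
    have hsub : {i : ↥T | ((i : ℂ → ℂ) '' K ∩ ball x 1).Nonempty} ⊆
        Subtype.val ⁻¹' S' := by
      rintro ⟨t, htT⟩ ⟨v, ⟨⟨y, hyK, rfl⟩, hvball⟩⟩
      obtain ⟨α, β, hα, ⟨a, b, rfl⟩, rfl⟩ := hT t htT
      simp only [Set.mem_preimage]
      have habs2β : ‖2 * ((a : ℂ) + (b : ℂ) * Complex.I)‖ ≤ M := by
        set β := (a : ℂ) + (b : ℂ) * Complex.I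
        have h1 : ap (α, 2 * β) y = α * y + 2 * β := rfl
        have h2 : ‖α * y‖ ≤ C := by
          rw [norm_mul, U4_abs hα, one_mul]
          have := hCb hyK
          rwa [mem_closedBall, Complex.dist_eq, sub_zero] at this
        have h3 : ‖ap (α, 2 * β) y - x‖ < 1 := by
          have := mem_ball.1 hvball
          rwa [Complex.dist_eq] at this
        calc ‖2 * β‖ = ‖(ap (α, 2 * β) y - x) + x - α * y‖ := by
              rw [h1]; congr 1; ring
          _ ≤ ‖(ap (α, 2 * β) y - x) + x‖ + ‖α * y‖ := by
              exact norm_sub_le _ _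
          _ ≤ ‖ap (α, 2 * β) y - x‖ + ‖x‖ + ‖α * y‖ := by
              have := norm_add_le (ap (α, 2 * β) y - x) x
              linarith
          _ ≤ M := by rw [hM]; linarith
      have hβabs : ‖(a : ℂ) + (b : ℂ) * Complex.I‖ ≤ M := by
        rw [norm_mul] at habs2β
        have h2 : ‖(2 : ℂ)‖ = 2 := by simp
        rw [h2] at habs2β
        nlinarith [norm_nonneg ((a : ℂ) + (b : ℂ) * Complex.I)]
      have hre : |(a : ℝ)| ≤ M := by
        have h1 : ((a : ℂ) + (b : ℂ) * Complex.I).re = (a : ℝ) := by simp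
        have := Complex.abs_re_le_norm ((a : ℂ) + (b : ℂ) * Complex.I)
        rw [h1] at this
        linarith
      have him : |(b : ℝ)| ≤ M := by
        have h1 : ((a : ℂ) + (b : ℂ) * Complex.I).im = (b : ℝ) := by simp
        have := Complex.abs_im_le_norm ((a : ℂ) + (b : ℂ) * Complex.I)
        rw [h1] at this
        linarith
      refine ⟨(α, a, b), ⟨hα, ?_, ?_⟩, rfl⟩
      · rw [Set.mem_Icc, ← abs_le]
        exact_mod_cast le_trans hre (Int.le_ceil M)
      · rw [Set.mem_Icc, ← abs_le]
        exact_mod_cast le_trans him (Int.le_ceil M)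
    exact Set.Finite.subset (Set.Finite.preimage Subtype.val_injective.injOn hS'fin) hsub
  · rintro ⟨t, htT⟩
    obtain ⟨α, β, hα, hβ, rfl⟩ := hT t htT
    have hcont : Continuous (ap (α, 2 * β)) :=
      ((continuous_const.mul continuous_id).add continuous_const :
        Continuous fun z : ℂ => α * z + 2 * β)
    exact (hc.image hcont).isClosed

/-! ### the abstract tiling theorem -/

theorem abstract_tiling {K : Set ℂ} (hc : IsCompact K)
    (hQ : ∀ s, Qp 1 (h s)) (hcover : K = ⋃ s : I4, ap (h s) '' K)
    (hpos : 0 < volume K) :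
    ∃ T : Set (ℂ → ℂ),
      (∀ t ∈ T, ∃ α β : ℂ, α ∈ ({1, Complex.I, -1, -Complex.I} : Set ℂ) ∧
        (∃ a b : ℤ, β = (a : ℂ) + (b : ℂ) * Complex.I) ∧
        t = fun z => α * z + 2 * β) ∧
      (⋃ t ∈ T, t '' K) = Set.univ ∧
      ∀ t ∈ T, ∀ t' ∈ T, t ≠ t' → volume (t '' K ∩ t' '' K) = 0 := by
  classical
  -- bound for K
  obtain ⟨C₀, hC₀⟩ := hc.isBounded.subset_closedBall 0
  set C := max C₀ 0 with hCdef
  have hC : 0 ≤ C := le_max_right _ _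
  have hCb : K ⊆ closedBall 0 C :=
    hC₀.trans (closedBall_subset_closedBall (le_max_left _ _))
  -- density point
  obtain ⟨z, hzK, hd⟩ := exists_density_point hc hpos
  have hds := density_small hc.isClosed.measurableSet hd
  -- the recursive construction
  have hcore : ∀ (r : List I4) (k : ℕ), ∃ w₀ : List I4,
      volume (closedBall z ((k : ℝ) + 1) \ ap (pinv (HP h (w₀ ++ r))) '' K)
        ≤ ENNReal.ofReal (1 / ((k : ℝ) + 1)) := by
    intro r k
    exact core_estimate h hQ hcover hzK hC hCb hds r ((k : ℝ) + 1) (1 / ((k : ℝ) + 1))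
      (by positivity) (by positivity)
  choose W hW using hcore
  set F : ℕ → List I4 := fun k => Nat.rec ([] : List I4) (fun k acc => W acc k ++ acc) k
    with hFdef
  have hFsucc : ∀ k, F (k + 1) = W (F k) k ++ F k := fun k => rfl
  have hFbound : ∀ k : ℕ,
      volume (closedBall z ((k : ℝ) + 1) \ ap (pinv (HP h (F (k + 1)))) '' K)
        ≤ ENNReal.ofReal (1 / ((k : ℝ) + 1)) := by
    intro k
    rw [hFsucc k]
    exact hW (F k) k
  have hFmono : ∀ k j : ℕ, ∃ u : List I4, F (k + j) = u ++ F k := by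
    intro k j
    induction j with
    | zero => exact ⟨[], by simp⟩
    | succ j ih =>
      obtain ⟨u, hu⟩ := ih
      refine ⟨W (F (k + j)) (k + j) ++ u, ?_⟩
      rw [show k + (j + 1) = (k + j) + 1 by ring, hFsucc (k + j), hu, List.append_assoc]
  -- the tiling set
  set T : Set (ℂ → ℂ) := {t | ∃ k : ℕ, ∃ w : List I4, w.length = (F k).length ∧
      t = ap (pmul (pinv (HP h (F k))) (HP h w))} with hT
  -- deck form of elements of T
  have hform : ∀ t ∈ T, ∃ α β : ℂ, α ∈ U4 ∧ GInt β ∧ t = ap (α, 2 * β) := by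
    rintro t ⟨k, w, hlen, rfl⟩
    have hq1 : Qp (F k).length (HP h (F k)) := Qp_HP h hQ (F k)
    have hq2 : Qp (F k).length (HP h w) := by rw [← hlen]; exact Qp_HP h hQ w
    obtain ⟨α, β, hα, hβ, heq⟩ := deck_of_Qp hq1 hq2
    exact ⟨α, β, hα, hβ, by rw [heq]⟩
  refine ⟨T, ?_, ?_, ?_⟩
  · -- the required form
    intro t htT
    obtain ⟨α, β, hα, ⟨a, b, rfl⟩, rfl⟩ := hform t htT
    refine ⟨α, (a : ℂ) + (b : ℂ) * Complex.I, ?_, ⟨a, b, rfl⟩, rfl⟩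
    simpa [U4] using hα
  · -- the union is everything
    set A := ⋃ t ∈ T, t '' K with hA
    have hclosed : IsClosed A := closed_union_of_deck hc hC hCb T hform
    have hsub : ∀ k : ℕ, ap (pinv (HP h (F k))) '' K ⊆ A := by
      intro k
      conv_lhs => rw [K_eq_level h hcover ((F k).length)]
      rw [Set.image_iUnion₂]
      refine Set.iUnion₂_subset fun w hw => ?_
      have ht : (ap (pmul (pinv (HP h (F k))) (HP h w))) ∈ T :=
        ⟨k, w, mem_Ln.1 hw, rfl⟩
      have : ap (pinv (HP h (F k))) '' (ap (HP h w) '' K)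
          = ap (pmul (pinv (HP h (F k))) (HP h w)) '' K := by
        rw [ap_pmul, Set.image_comp]
      rw [this]
      exact Set.subset_biUnion_of_mem (u := fun t => t '' K) ht
    have hnullball : ∀ R : ℕ, volume (Aᶜ ∩ closedBall z R) = 0 := by
      intro R
      set v := volume (Aᶜ ∩ closedBall z R) with hv
      have hvk : ∀ k : ℕ, R ≤ k + 1 → v ≤ ENNReal.ofReal (1 / ((k : ℝ) + 1)) := by
        intro k hk
        refine le_trans (measure_mono ?_) (hFbound k)
        rintro x ⟨hxA, hxB⟩
        constructor
        · refine closedBall_subset_closedBall ?_ hxB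
          exact_mod_cast hk
        · intro hxim
          exact hxA (hsub (k + 1) hxim)
      by_contra hne0
      have hvpos : 0 < v := pos_iff_ne_zero.2 hne0
      have hvfin : v ≠ ⊤ := by
        refine ne_top_of_le_ne_top ?_ (measure_mono Set.inter_subset_right)
        exact measure_closedBall_lt_top.ne
      have hvr : 0 < v.toReal := ENNReal.toReal_pos hne0 hvfin
      obtain ⟨q, hq⟩ := exists_nat_one_div_lt hvr
      set k := max q R with hkdef
      have h1 : (1 : ℝ) / ((k : ℝ) + 1) ≤ 1 / ((q : ℝ) + 1) := by
        apply div_le_div_of_nonneg_left one_pos.le (by positivity)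
        have : (q : ℝ) ≤ (k : ℝ) := by exact_mod_cast le_max_left q R
        linarith
      have h2 : v ≤ ENNReal.ofReal (1 / ((k : ℝ) + 1)) :=
        hvk k (le_trans (le_max_right q R) (Nat.le_succ_of_le le_rfl))
      have h3 : v ≤ ENNReal.ofReal (1 / ((q : ℝ) + 1)) :=
        le_trans h2 (ENNReal.ofReal_le_ofReal h1)
      have h4 : ENNReal.ofReal (1 / ((q : ℝ) + 1)) < ENNReal.ofReal v.toReal :=
        (ENNReal.ofReal_lt_ofReal_iff hvr).2 hq
      rw [ENNReal.ofReal_toReal hvfin] at h4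
      exact absurd (lt_of_le_of_lt h3 h4) (lt_irrefl v)
    have hnull : volume Aᶜ = 0 := by
      have hcover' : Aᶜ = ⋃ R : ℕ, Aᶜ ∩ closedBall z R := by
        ext x
        simp only [Set.mem_iUnion, Set.mem_inter_iff, mem_closedBall]
        constructor
        · intro hx
          obtain ⟨R, hR⟩ := exists_nat_ge (dist x z)
          exact ⟨R, hx, hR⟩
        · rintro ⟨R, hx, _⟩
          exact hx
      rw [hcover']
      exact measure_iUnion_null fun R => hnullball R
    have hempty : Aᶜ = ∅ := by
      by_contra hne
      have : 0 < volume Aᶜ :=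
        (hclosed.isOpen_compl).measure_pos volume (Set.nonempty_iff_ne_empty.2 hne)
      rw [hnull] at this
      exact lt_irrefl 0 this
    exact Set.compl_empty_iff.1 hempty
  · -- null overlaps
    have key : ∀ k k' : ℕ, k ≤ k' → ∀ w w' : List I4,
        w.length = (F k).length → w'.length = (F k').length →
        ap (pmul (pinv (HP h (F k))) (HP h w)) ≠ ap (pmul (pinv (HP h (F k'))) (HP h w')) →
        volume (ap (pmul (pinv (HP h (F k))) (HP h w)) '' K ∩
          ap (pmul (pinv (HP h (F k'))) (HP h w')) '' K) = 0 := by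
      intro k k' hkk' w w' hlen hlen' hne
      obtain ⟨u, hu⟩ := hFmono k (k' - k)
      rw [Nat.add_sub_cancel' hkk'] at hu
      have hrw : ap (pmul (pinv (HP h (F k))) (HP h w))
          = ap (pmul (pinv (HP h (F k'))) (HP h (u ++ w))) := by
        rw [hu, patch_extend h hQ]
      have hlen2 : (u ++ w).length = (F k').length := by
        rw [List.length_append, hlen, hu, List.length_append]
      have hwne : u ++ w ≠ w' := by
        intro hcontra
        apply hne
        rw [hrw, hcontra]
      have hnull0 : volume (ap (HP h (u ++ w)) '' K ∩ ap (HP h w') '' K) = 0 :=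
        level_null h hc hQ hcover (mem_Ln.2 hlen2) (mem_Ln.2 hlen') hwne
      rw [hrw]
      have himg : ∀ v : List I4, ap (pmul (pinv (HP h (F k'))) (HP h v)) '' K
          = ap (pinv (HP h (F k'))) '' (ap (HP h v) '' K) := by
        intro v
        rw [ap_pmul, Set.image_comp]
      rw [himg, himg]
      exact vol_image_inter (pinv_ne_zero _ (HP_fst_ne_zero h hQ (F k'))) hnull0
    rintro t ⟨k, w, hlen, rfl⟩ t' ⟨k', w', hlen', rfl⟩ hne
    rcases le_total k k' with hkk' | hkk'
    · exact key k k' hkk' w w' hlen hlen' hne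
    · rw [Set.inter_comm]
      exact key k' k hkk' w' w hlen' hlen (Ne.symm hne)

/-! ### the concrete multipliers -/

/-- each admissible multiplier is a unit times `(1+i)/2`. -/
lemma mem_M_decomp {μ : ℂ}
    (hμ : μ = (1 + Complex.I) / 2 ∨ μ = (1 - Complex.I) / 2 ∨
          μ = (-1 + Complex.I) / 2 ∨ μ = (-1 - Complex.I) / 2) :
    ∃ u ∈ U4, μ = u * ((1 + Complex.I) / 2) := by
  rcases hμ with rfl | rfl | rfl | rfl
  · exact ⟨1, by simp [U4], by ring⟩
  · refine ⟨-Complex.I, by simp [U4], ?_⟩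
    linear_combination ((1:ℂ)/2) * Complex.I_sq
  · refine ⟨Complex.I, by simp [U4], ?_⟩
    linear_combination (-(1:ℂ)/2) * Complex.I_sq
  · exact ⟨-1, by simp [U4], by ring⟩

lemma I_mem_U4 : Complex.I ∈ U4 := by simp [U4]

lemma two_mul_mul_mem_U4 {μ ν : ℂ}
    (hμ : μ = (1 + Complex.I) / 2 ∨ μ = (1 - Complex.I) / 2 ∨
          μ = (-1 + Complex.I) / 2 ∨ μ = (-1 - Complex.I) / 2)
    (hν : ν = (1 + Complex.I) / 2 ∨ ν = (1 - Complex.I) / 2 ∨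
          ν = (-1 + Complex.I) / 2 ∨ ν = (-1 - Complex.I) / 2) :
    (2 : ℂ) * (μ * ν) ∈ U4 := by
  obtain ⟨u, hu, rfl⟩ := mem_M_decomp hμ
  obtain ⟨v, hv, rfl⟩ := mem_M_decomp hν
  have : (2 : ℂ) * ((u * ((1 + Complex.I) / 2)) * (v * ((1 + Complex.I) / 2)))
      = (u * v) * Complex.I := by
    linear_combination ((u * v) / 2) * Complex.I_sq
  rw [this]
  exact U4_mul (U4_mul hu hv) I_mem_U4

lemma mul_one_add_I_mem_U4 {μ : ℂ}
    (hμ : μ = (1 + Complex.I) / 2 ∨ μ = (1 - Complex.I) / 2 ∨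
          μ = (-1 + Complex.I) / 2 ∨ μ = (-1 - Complex.I) / 2) :
    μ * (1 + Complex.I) ∈ U4 := by
  obtain ⟨u, hu, rfl⟩ := mem_M_decomp hμ
  have : (u * ((1 + Complex.I) / 2)) * (1 + Complex.I) = u * Complex.I := by
    linear_combination (u / 2) * Complex.I_sq
  rw [this]
  exact U4_mul hu I_mem_U4

lemma GInt_one_add_I_mul (a b : ℤ) :
    GInt ((1 + Complex.I) * ((a : ℂ) + (b : ℂ) * Complex.I)) := by
  refine ⟨a - b, a + b, ?_⟩
  push_cast
  linear_combination (b : ℂ) * Complex.I_sq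

lemma Qp_pair {μ ν βa βb : ℂ}
    (hμ : μ = (1 + Complex.I) / 2 ∨ μ = (1 - Complex.I) / 2 ∨
          μ = (-1 + Complex.I) / 2 ∨ μ = (-1 - Complex.I) / 2)
    (hν : ν = (1 + Complex.I) / 2 ∨ ν = (1 - Complex.I) / 2 ∨
          ν = (-1 + Complex.I) / 2 ∨ ν = (-1 - Complex.I) / 2)
    (ha : ∃ a b : ℤ, βa = (1 + Complex.I) * ((a : ℂ) + (b : ℂ) * Complex.I))
    (hb : ∃ a b : ℤ, βb = (1 + Complex.I) * ((a : ℂ) + (b : ℂ) * Complex.I)) :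
    Qp 1 (μ * ν, μ * βb + βa) := by
  constructor
  · rw [pow_one]
    exact two_mul_mul_mem_U4 hμ hν
  · refine ⟨μ * βb + βa, ?_, by rw [pow_one]⟩
    obtain ⟨a, b, rfl⟩ := hb
    obtain ⟨a', b', rfl⟩ := ha
    apply GInt_add
    · rw [← mul_assoc]
      exact GInt_mul (GInt_U4 (mul_one_add_I_mem_U4 hμ)) ⟨a, b, rfl⟩
    · exact GInt_one_add_I_mul a' b'

end

end LT


open MeasureTheory

/-- Instance of the Tiling Theorem for the Lattès map: if the attractor `K` of
`gⱼ(z) = μⱼ z + βⱼ` (multipliers in `{(1±i)/2,(-1±i)/2}`, translations in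
`(1+i)ℤ[i]`) has positive two-dimensional Lebesgue measure, then `K` tiles `ℂ`
under deck transformations `z ↦ αz + 2β` with `α⁴ = 1`, `β ∈ ℤ[i]`. -/
theorem lattes_tiling (μ₁ μ₂ : ℂ)
    (hμ₁ : μ₁ ∈ ({(1 + Complex.I) / 2, (1 - Complex.I) / 2,
                  (-1 + Complex.I) / 2, (-1 - Complex.I) / 2} : Set ℂ))
    (hμ₂ : μ₂ ∈ ({(1 + Complex.I) / 2, (1 - Complex.I) / 2,
                  (-1 + Complex.I) / 2, (-1 - Complex.I) / 2} : Set ℂ))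
    (β₁ β₂ : ℂ)
    (hβ₁ : ∃ a b : ℤ, β₁ = (1 + Complex.I) * ((a : ℂ) + (b : ℂ) * Complex.I))
    (hβ₂ : ∃ a b : ℤ, β₂ = (1 + Complex.I) * ((a : ℂ) + (b : ℂ) * Complex.I))
    (K : Set ℂ) (hne : K.Nonempty) (hc : IsCompact K)
    (hK : K = (fun z : ℂ => μ₁ * z + β₁) '' K ∪
              (fun z : ℂ => μ₂ * z + β₂) '' K)
    (hpos : 0 < volume K) :
    ∃ T : Set (ℂ → ℂ),
      (∀ t ∈ T, ∃ α β : ℂ, α ∈ ({1, Complex.I, -1, -Complex.I} : Set ℂ) ∧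
        (∃ a b : ℤ, β = (a : ℂ) + (b : ℂ) * Complex.I) ∧
        t = fun z => α * z + 2 * β) ∧
      (⋃ t ∈ T, t '' K) = Set.univ ∧
      ∀ t ∈ T, ∀ t' ∈ T, t ≠ t' → volume (t '' K ∩ t' '' K) = 0 := by
  classical
  simp only [Set.mem_insert_iff, Set.mem_singleton_iff] at hμ₁ hμ₂
  -- the four second-level contractions
  set mu : Fin 2 → ℂ := fun i => if i = 0 then μ₁ else μ₂ with hmu
  set be : Fin 2 → ℂ := fun i => if i = 0 then β₁ else β₂ with hbe
  set h : LT.I4 → ℂ × ℂ := fun s => (mu s.1 * mu s.2, mu s.1 * be s.2 + be s.1) with hh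
  have hmucases : ∀ i : Fin 2, mu i = (1 + Complex.I) / 2 ∨ mu i = (1 - Complex.I) / 2 ∨
      mu i = (-1 + Complex.I) / 2 ∨ mu i = (-1 - Complex.I) / 2 := by
    intro i
    fin_cases i
    · simpa [hmu] using hμ₁
    · simpa [hmu] using hμ₂
  have hbecases : ∀ i : Fin 2,
      ∃ a b : ℤ, be i = (1 + Complex.I) * ((a : ℂ) + (b : ℂ) * Complex.I) := by
    intro i
    fin_cases i
    · simpa [hbe] using hβ₁
    · simpa [hbe] using hβ₂
  have hQ : ∀ s : LT.I4, LT.Qp 1 (h s) := by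
    intro s
    exact LT.Qp_pair (hmucases s.1) (hmucases s.2) (hbecases s.1) (hbecases s.2)
  -- the images of K under the basic maps stay in K
  have hsubK : ∀ i : Fin 2, (fun z : ℂ => mu i * z + be i) '' K ⊆ K := by
    intro i
    fin_cases i
    · conv_rhs => rw [hK]
      simp only [hmu, hbe]
      norm_num
    · conv_rhs => rw [hK]
      simp only [hmu, hbe]
      norm_num
  -- the level-two cover
  have hcover : K = ⋃ s : LT.I4, LT.ap (h s) '' K := by
    apply Set.Subset.antisymm
    · intro x hx
      rw [hK] at hx
      have hg : ∀ i j : Fin 2, ∀ w : ℂ,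
          mu i * (mu j * w + be j) + be i = LT.ap (h (i, j)) w := by
        intro i j w
        show mu i * (mu j * w + be j) + be i = (mu i * mu j) * w + (mu i * be j + be i)
        ring
      have hmu0 : mu 0 = μ₁ := by simp [hmu]
      have hmu1 : mu 1 = μ₂ := by simp [hmu]
      have hbe0 : be 0 = β₁ := by simp [hbe]
      have hbe1 : be 1 = β₂ := by simp [hbe]
      rcases hx with ⟨y, hy, rfl⟩ | ⟨y, hy, rfl⟩
      · rw [hK] at hy
        rcases hy with ⟨w, hw, rfl⟩ | ⟨w, hw, rfl⟩
        · refine Set.mem_iUnion.2 ⟨(0, 0), ⟨w, hw, ?_⟩⟩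
          rw [← hg 0 0 w, hmu0, hbe0]
        · refine Set.mem_iUnion.2 ⟨(0, 1), ⟨w, hw, ?_⟩⟩
          rw [← hg 0 1 w, hmu0, hmu1, hbe0, hbe1]
      · rw [hK] at hy
        rcases hy with ⟨w, hw, rfl⟩ | ⟨w, hw, rfl⟩
        · refine Set.mem_iUnion.2 ⟨(1, 0), ⟨w, hw, ?_⟩⟩
          rw [← hg 1 0 w, hmu0, hmu1, hbe0, hbe1]
        · refine Set.mem_iUnion.2 ⟨(1, 1), ⟨w, hw, ?_⟩⟩
          rw [← hg 1 1 w, hmu1, hbe1]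
    · apply Set.iUnion_subset
      rintro ⟨i, j⟩ x ⟨w, hw, rfl⟩
      have : LT.ap (h (i, j)) w = mu i * (mu j * w + be j) + be i := by
        show (mu i * mu j) * w + (mu i * be j + be i) = mu i * (mu j * w + be j) + be i
        ring
      rw [this]
      exact hsubK i ⟨mu j * w + be j, hsubK j ⟨w, hw, rfl⟩, rfl⟩
  obtain ⟨T, h1, h2, h3⟩ := LT.abstract_tiling h hc hQ hcover hpos
  exact ⟨T, h1, h2, h3⟩
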